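/- Let g ≥ 4 and let M_g(α) be the determinant of the (2g−3)×(2g−3) submatrix of Z (as in the binary curve construction) on columns (1,2),…,(1,g),(2,3),…,(2,g), viewed as a polynomial in the variables α_{1,i}, α_{2,i}. Then the coefficient of the monomial α_{1,g}^{g−2} α_{2,g}^{g−3} in M_g equals (α_{2,2} − α_{2,1}) · M_{g−1}, where M_{g−1} is the analogous determinant in the variables α_{k,i} with i ≤ g−1. -/

import Mathlib

open MvPolynomial

/-- Complete homogeneous symmetric polynomial of degree `h` in two variables. -/
def qpoly {R : Type*} [CommRing R] (h : ℕ) (x y : R) : R :=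
  ∑ m ∈ Finset.range (h + 1), x ^ m * y ^ (h - m)

/-- The variable `α_{k,i}` (with `k ∈ {1,2}` encoded as `Fin 2` and `i ∈ {1,…,g}`
encoded as `0,…,g−1`), as an indeterminate over `ℂ`. -/
noncomputable def av (k : Fin 2) (i : ℕ) : MvPolynomial (Fin 2 × ℕ) ℂ :=
  MvPolynomial.X (k, i)

/-- The `(2g−3)×(2g−3)` submatrix of `Z` on the columns
`(1,2),…,(1,g),(2,3),…,(2,g)`: rows are `(q_h(α_{1,i},α_{1,j}))` for `h = 0,…,g−2`
followed by `(q_h(α_{2,i},α_{2,j}))` for `h = 1,…,g−2`. -/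
noncomputable def Nmat (g : ℕ) :
    Matrix (Fin (g - 1) ⊕ Fin (g - 2)) (Fin (g - 1) ⊕ Fin (g - 2))
      (MvPolynomial (Fin 2 × ℕ) ℂ) :=
  Matrix.of fun r c =>
    match r, c with
    | Sum.inl h, Sum.inl i => qpoly h.1 (av 0 0) (av 0 (i.1 + 1))
    | Sum.inl h, Sum.inr j => qpoly h.1 (av 0 1) (av 0 (j.1 + 2))
    | Sum.inr h, Sum.inl i => qpoly (h.1 + 1) (av 1 0) (av 1 (i.1 + 1))
    | Sum.inr h, Sum.inr j => qpoly (h.1 + 1) (av 1 1) (av 1 (j.1 + 2))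

/-- `M_g`, the determinant of the above submatrix, as a polynomial in the `α_{k,i}`. -/
noncomputable def Mdet (g : ℕ) : MvPolynomial (Fin 2 × ℕ) ℂ := (Nmat g).det

-- helpers
abbrev PA := MvPolynomial (Fin 2 × ℕ) ℂ
abbrev Idx (m : ℕ) := Fin (m+3) ⊕ Fin (m+2)
def cc1 (m : ℕ) : Idx m := Sum.inl ⟨m+2, by omega⟩
def cc2 (m : ℕ) : Idx m := Sum.inr ⟨m+1, by omega⟩
noncomputable def NN (m : ℕ) : Matrix (Idx m) (Idx m) PA := Nmat (m+4)
noncomputable def uvec (m a : ℕ) (x : PA) : Idx m → PA :=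
  Sum.elim (fun h => if a ≤ h.1 then x ^ (h.1 - a) else 0) (fun _ => 0)
noncomputable def wvec (m a : ℕ) (y : PA) : Idx m → PA :=
  Sum.elim (fun _ => 0) (fun h => if a ≤ h.1 + 1 then y ^ (h.1 + 1 - a) else 0)
noncomputable def MatU (m : ℕ) (v1 v2 : Idx m → PA) : Matrix (Idx m) (Idx m) PA :=
  ((NN m).updateCol (cc1 m) v1).updateCol (cc2 m) v2

example (m : ℕ) : Mdet (m+4) = (NN m).det := rfl
example (m : ℕ) : Mdet (m+3) = (Matrix.of (fun (r c : Fin (m+2) ⊕ Fin (m+1)) => (0:PA))).det ∨ True := Or.inr trivial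

-- generic: det linear over finset sum in a column
theorem det_updateColumn_finset_sum {n R β : Type*} [DecidableEq n] [Fintype n] [CommRing R]
    (M : Matrix n n R) (j : n) (S : Finset β) (v : β → n → R) :
    (M.updateCol j (∑ b ∈ S, v b)).det = ∑ b ∈ S, (M.updateCol j (v b)).det := by
  classical
  induction S using Finset.cons_induction with
  | empty =>
      simp only [Finset.sum_empty]
      exact Matrix.det_eq_zero_of_column_eq_zero j (fun i => by simp)
  | cons b S hb ih =>
      rw [Finset.sum_cons, Finset.sum_cons, ← ih, ← Matrix.det_updateCol_add]

theorem updateColumn_comm {n R : Type*} [DecidableEq n] [Fintype n] [CommRing R]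
    (M : Matrix n n R) {j j' : n} (h : j ≠ j') (u v : n → R) :
    (M.updateCol j u).updateCol j' v = (M.updateCol j' v).updateCol j u := by
  ext i k
  by_cases h1 : k = j' <;> by_cases h2 : k = j <;>
    simp_all [Matrix.updateCol_apply]

theorem sum_ite_qpoly {R : Type*} [CommRing R] (n k : ℕ) (hk : k < n) (x t : R) :
    ∑ a ∈ Finset.range n, (if a ≤ k then t ^ a * x ^ (k - a) else 0) = qpoly k x t := by
  rw [show qpoly k x t = ∑ a ∈ Finset.range (k+1), x ^ (k - a) * t ^ (k - (k - a)) from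
    (Finset.sum_range_reflect _ _).symm]
  rw [← Finset.sum_subset (Finset.range_subset_range.2 hk)
      (fun a _ ha => if_neg (fun hle => ha (Finset.mem_range.2 (by omega))))]
  refine Finset.sum_congr rfl fun a ha => ?_
  rw [Finset.mem_range] at ha
  rw [if_pos (by omega), Nat.sub_sub_self (by omega), mul_comm]

theorem col_decomp (m : ℕ) (x y : PA) :
    (Sum.elim (fun h : Fin (m+3) => qpoly h.1 x (av 0 (m+3)))
      (fun h : Fin (m+2) => qpoly (h.1+1) y (av 1 (m+3))) : Idx m → PA)
    = ∑ a ∈ Finset.range (m+3), (av 0 (m+3) ^ a • uvec m a x + av 1 (m+3) ^ a • wvec m a y) := by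
  funext r
  rw [Finset.sum_apply]
  cases r with
  | inl h =>
      simp only [Sum.elim_inl, Pi.add_apply, Pi.smul_apply, uvec, wvec, smul_eq_mul,
        mul_zero, add_zero, mul_ite]
      exact (sum_ite_qpoly (m+3) h.1 h.2 x _).symm
  | inr h =>
      simp only [Sum.elim_inr, Pi.add_apply, Pi.smul_apply, uvec, wvec, smul_eq_mul,
        mul_zero, zero_add, mul_ite]
      exact (sum_ite_qpoly (m+3) (h.1+1) (by omega) y _).symm

theorem colN1 (m : ℕ) : (fun r => NN m r (cc1 m)) =
    (Sum.elim (fun h : Fin (m+3) => qpoly h.1 (av 0 0) (av 0 (m+3)))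
      (fun h : Fin (m+2) => qpoly (h.1+1) (av 1 0) (av 1 (m+3))) : Idx m → PA) := by
  funext r; cases r <;> rfl

theorem colN2 (m : ℕ) : (fun r => NN m r (cc2 m)) =
    (Sum.elim (fun h : Fin (m+3) => qpoly h.1 (av 0 1) (av 0 (m+3)))
      (fun h : Fin (m+2) => qpoly (h.1+1) (av 1 1) (av 1 (m+3))) : Idx m → PA) := by
  funext r; cases r <;> rfl

theorem cc_ne (m : ℕ) : cc1 m ≠ cc2 m := by simp [cc1, cc2]

theorem det_col1_expand (m : ℕ) (z : Idx m → PA) :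
    (MatU m (fun r => NN m r (cc1 m)) z).det
    = ∑ a ∈ Finset.range (m+3),
        (av 0 (m+3) ^ a * (MatU m (uvec m a (av 0 0)) z).det
          + av 1 (m+3) ^ a * (MatU m (wvec m a (av 1 0)) z).det) := by
  have hcomm : ∀ v : Idx m → PA, MatU m v z
      = ((NN m).updateCol (cc2 m) z).updateCol (cc1 m) v := fun v =>
    updateColumn_comm (NN m) (cc_ne m) v z
  rw [hcomm, colN1, col_decomp, det_updateColumn_finset_sum]
  refine Finset.sum_congr rfl fun a _ => ?_
  rw [Matrix.det_updateCol_add, Matrix.det_updateCol_smul, Matrix.det_updateCol_smul,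
    ← hcomm, ← hcomm]

theorem det_col2_expand (m : ℕ) (v : Idx m → PA) :
    (MatU m v (fun r => NN m r (cc2 m))).det
    = ∑ b ∈ Finset.range (m+3),
        (av 0 (m+3) ^ b * (MatU m v (uvec m b (av 0 1))).det
          + av 1 (m+3) ^ b * (MatU m v (wvec m b (av 1 1))).det) := by
  unfold MatU
  rw [colN2, col_decomp, det_updateColumn_finset_sum]
  refine Finset.sum_congr rfl fun b _ => ?_
  rw [Matrix.det_updateCol_add, Matrix.det_updateCol_smul, Matrix.det_updateCol_smul]

theorem expand (m : ℕ) : Mdet (m+4) =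
    ∑ a ∈ Finset.range (m+3), ∑ b ∈ Finset.range (m+3),
      (av 0 (m+3)^a * av 0 (m+3)^b * (MatU m (uvec m a (av 0 0)) (uvec m b (av 0 1))).det
       + av 0 (m+3)^a * av 1 (m+3)^b * (MatU m (uvec m a (av 0 0)) (wvec m b (av 1 1))).det
       + av 1 (m+3)^a * av 0 (m+3)^b * (MatU m (wvec m a (av 1 0)) (uvec m b (av 0 1))).det
       + av 1 (m+3)^a * av 1 (m+3)^b * (MatU m (wvec m a (av 1 0)) (wvec m b (av 1 1))).det) := by
  have h0 : Mdet (m+4) = (MatU m (fun r => NN m r (cc1 m)) (fun r => NN m r (cc2 m))).det := by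
    unfold MatU
    rw [Matrix.updateCol_eq_self, Matrix.updateCol_eq_self]
    rfl
  rw [h0, det_col2_expand]
  rw [Finset.sum_comm]
  refine Finset.sum_congr rfl fun a _ => ?_
  simp only [det_col1_expand, Finset.mul_sum, ← Finset.sum_add_distrib]
  refine Finset.sum_congr rfl fun b _ => ?_
  ring

def SV (m : ℕ) : Set (Fin 2 × ℕ) := {v | v.2 ≠ m+3}

theorem qpoly_mem {S : Subalgebra ℂ PA} {x y : PA} (hx : x ∈ S) (hy : y ∈ S) (h : ℕ) :
    qpoly h x y ∈ S := by
  refine Subalgebra.sum_mem _ fun i _ => mul_mem (pow_mem hx _) (pow_mem hy _)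

theorem det_mem {n : Type*} [Fintype n] [DecidableEq n] {S : Subalgebra ℂ PA}
    (M : Matrix n n PA) (h : ∀ i j, M i j ∈ S) : M.det ∈ S := by
  rw [Matrix.det_apply]
  refine Subalgebra.sum_mem _ fun σ _ => ?_
  rw [Units.smul_def, zsmul_eq_mul]
  exact mul_mem (intCast_mem S _) (prod_mem fun i _ => h _ _)

theorem av_mem (m : ℕ) (k : Fin 2) {i : ℕ} (hi : i ≠ m+3) :
    av k i ∈ supported ℂ (SV m) := by
  rw [av, X_mem_supported]
  exact hi

theorem uvec_mem (m a : ℕ) {x : PA} (hx : x ∈ supported ℂ (SV m)) (r : Idx m) :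
    uvec m a x r ∈ supported ℂ (SV m) := by
  cases r with
  | inl h => dsimp [uvec]; split_ifs; exacts [pow_mem hx _, zero_mem _]
  | inr h => exact zero_mem _

theorem wvec_mem (m a : ℕ) {y : PA} (hy : y ∈ supported ℂ (SV m)) (r : Idx m) :
    wvec m a y r ∈ supported ℂ (SV m) := by
  cases r with
  | inl h => exact zero_mem _
  | inr h => dsimp [wvec]; split_ifs; exacts [pow_mem hy _, zero_mem _]

theorem NN_entry_mem (m : ℕ) (r c : Idx m) (hc1 : c ≠ cc1 m) (hc2 : c ≠ cc2 m) :
    NN m r c ∈ supported ℂ (SV m) := by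
  cases r with
  | inl h =>
    cases c with
    | inl i =>
        have : i.1 ≠ m+2 := fun hh => hc1 (by simp [cc1, Fin.ext_iff, hh])
        exact qpoly_mem (av_mem m 0 (by omega)) (av_mem m 0 (by omega)) _
    | inr j =>
        have : j.1 ≠ m+1 := fun hh => hc2 (by simp [cc2, Fin.ext_iff, hh])
        exact qpoly_mem (av_mem m 0 (by omega)) (av_mem m 0 (by omega)) _
  | inr h =>
    cases c with
    | inl i =>
        have : i.1 ≠ m+2 := fun hh => hc1 (by simp [cc1, Fin.ext_iff, hh])
        exact qpoly_mem (av_mem m 1 (by omega)) (av_mem m 1 (by omega)) _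
    | inr j =>
        have : j.1 ≠ m+1 := fun hh => hc2 (by simp [cc2, Fin.ext_iff, hh])
        exact qpoly_mem (av_mem m 1 (by omega)) (av_mem m 1 (by omega)) _

theorem detMatU_mem (m : ℕ) (v1 v2 : Idx m → PA)
    (h1 : ∀ r, v1 r ∈ supported ℂ (SV m)) (h2 : ∀ r, v2 r ∈ supported ℂ (SV m)) :
    (MatU m v1 v2).det ∈ supported ℂ (SV m) := by
  refine det_mem _ fun r c => ?_
  unfold MatU
  rw [Matrix.updateCol_apply, Matrix.updateCol_apply]
  split_ifs with hA hB
  · exact h2 r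
  · exact h1 r
  · exact NN_entry_mem m r c hB hA

theorem coeff_zero_of_var (m : ℕ) {p : PA} (hp : p ∈ supported ℂ (SV m))
    (e : (Fin 2 × ℕ) →₀ ℕ) (he : e ((0:Fin 2), m+3) ≠ 0 ∨ e ((1:Fin 2), m+3) ≠ 0) :
    coeff e p = 0 := by
  by_contra h
  have hsup : e ∈ p.support := mem_support_iff.2 h
  rw [mem_supported] at hp
  rcases he with he | he
  · have : ((0:Fin 2), m+3) ∈ p.vars :=
      (mem_vars _).2 ⟨e, hsup, Finsupp.mem_support_iff.2 he⟩
    exact (hp this) rfl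
  · have : ((1:Fin 2), m+3) ∈ p.vars :=
      (mem_vars _).2 ⟨e, hsup, Finsupp.mem_support_iff.2 he⟩
    exact (hp this) rfl

theorem coeff_key (m : ℕ) {p : PA} (hp : p ∈ supported ℂ (SV m)) (a b : ℕ)
    (d : (Fin 2 × ℕ) →₀ ℕ) (hd1 : d ((0:Fin 2), m+3) = 0) (hd2 : d ((1:Fin 2), m+3) = 0) :
    coeff (d + Finsupp.single ((0:Fin 2), m+3) (m+2) + Finsupp.single ((1:Fin 2), m+3) (m+1))
      (av 0 (m+3) ^ a * av 1 (m+3) ^ b * p)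
    = if a = m+2 ∧ b = m+1 then coeff d p else 0 := by
  have hts : ((0:Fin 2), (m+3:ℕ)) ≠ ((1:Fin 2), (m+3:ℕ)) := by
    simp [Prod.ext_iff]
  rw [av, av, X_pow_eq_monomial, X_pow_eq_monomial, monomial_mul, one_mul,
    coeff_monomial_mul']
  set t : Fin 2 × ℕ := ((0:Fin 2), m+3) with ht
  set s : Fin 2 × ℕ := ((1:Fin 2), m+3) with hs
  by_cases hab : a = m+2 ∧ b = m+1
  · obtain ⟨rfl, rfl⟩ := hab
    have hD : d + Finsupp.single t (m+2) + Finsupp.single s (m+1)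
        = d + (Finsupp.single t (m+2) + Finsupp.single s (m+1)) := by rw [add_assoc]
    rw [hD, if_pos (self_le_add_left _ _), add_tsub_cancel_right, one_mul, if_pos ⟨rfl, rfl⟩]
  · rw [if_neg hab]
    split_ifs with hle
    · rw [one_mul]
      refine coeff_zero_of_var m hp _ ?_
      have hlet : a ≤ m+2 := by
        have := hle t
        simpa [Finsupp.add_apply, Finsupp.single_apply, hts, hd1] using this
      have hles : b ≤ m+1 := by
        have := hle s
        simpa [Finsupp.add_apply, Finsupp.single_apply, hts, Ne.symm hts, hd2] using this
      have hvt : (d + Finsupp.single t (m+2) + Finsupp.single s (m+1)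
          - (Finsupp.single t a + Finsupp.single s b)) t = m+2-a := by
        simp [Finsupp.tsub_apply, Finsupp.add_apply, Finsupp.single_apply, hts, Ne.symm hts, hd1]
      have hvs : (d + Finsupp.single t (m+2) + Finsupp.single s (m+1)
          - (Finsupp.single t a + Finsupp.single s b)) s = m+1-b := by
        simp [Finsupp.tsub_apply, Finsupp.add_apply, Finsupp.single_apply, hts, Ne.symm hts, hd2]
      rcases (by omega : a < m+2 ∨ b < m+1) with hc | hc
      · exact Or.inl (by rw [hvt]; omega)
      · exact Or.inr (by rw [hvs]; omega)
    · rfl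

noncomputable def e1v (m : ℕ) : Idx m → PA :=
  fun r => if r = Sum.inl ⟨m+2, by omega⟩ then 1 else 0
noncomputable def eAv (m : ℕ) : Idx m → PA :=
  fun r => if r = Sum.inr ⟨m, by omega⟩ then 1 else 0
noncomputable def eBv (m : ℕ) : Idx m → PA :=
  fun r => if r = Sum.inr ⟨m+1, by omega⟩ then 1 else 0

theorem uvec_top (m : ℕ) (x : PA) : uvec m (m+2) x = e1v m := by
  funext r
  cases r with
  | inl h =>
      by_cases hh : h.1 = m+2
      · simp [uvec, e1v, hh, Fin.ext_iff]
      · have h2 : ¬ (m+2 ≤ h.1) := by omega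
        simp [uvec, e1v, hh, h2, Fin.ext_iff]
  | inr h => simp [uvec, e1v]

theorem wvec_top (m : ℕ) (y : PA) : wvec m (m+1) y = eAv m + y • eBv m := by
  funext r
  cases r with
  | inl h => simp [wvec, eAv, eBv]
  | inr h =>
      rcases (by omega : h.1 = m ∨ h.1 = m+1 ∨ h.1 + 1 < m + 1) with hh | hh | hh
      · have : m+1 ≤ h.1+1 := by omega
        simp [wvec, eAv, eBv, Fin.ext_iff, hh, this]
      · have : m+1 ≤ h.1+1 := by omega
        have h2 : h.1 ≠ m := by omega
        simp [wvec, eAv, eBv, Fin.ext_iff, hh, h2, this]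
      · have h2 : h.1 ≠ m := by omega
        have h3 : h.1 ≠ m+1 := by omega
        have h4 : ¬ (m+1 ≤ h.1+1) := by omega
        have h5 : (Sum.inr h : Idx m) ≠ Sum.inr ⟨m, by omega⟩ := by simp [Fin.ext_iff, h2]
        have h6 : (Sum.inr h : Idx m) ≠ Sum.inr ⟨m+1, by omega⟩ := by simp [Fin.ext_iff, h3]
        simp only [wvec, Sum.elim_inr, if_neg h4, eAv, eBv, Pi.add_apply, Pi.smul_apply,
          smul_eq_mul, if_neg h5, if_neg h6]
        ring

theorem swap_det (m : ℕ) (y : PA) (v : Idx m → PA) :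
    (MatU m v (e1v m)).det = -(MatU m (e1v m) v).det := by
  have hswap : MatU m v (e1v m)
      = (MatU m (e1v m) v).submatrix id (Equiv.swap (cc1 m) (cc2 m)) := by
    ext r c
    simp only [Matrix.submatrix_apply, id_eq]
    by_cases h1 : c = cc1 m
    · subst h1
      rw [Equiv.swap_apply_left]
      unfold MatU
      rw [Matrix.updateCol_ne (cc_ne m), Matrix.updateCol_self,
        Matrix.updateCol_self]
    · by_cases h2 : c = cc2 m
      · subst h2
        rw [Equiv.swap_apply_right]
        unfold MatU
        rw [Matrix.updateCol_self, Matrix.updateCol_ne (cc_ne m),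
          Matrix.updateCol_self]
      · rw [Equiv.swap_apply_of_ne_of_ne h1 h2]
        unfold MatU
        rw [Matrix.updateCol_ne h2, Matrix.updateCol_ne h1,
          Matrix.updateCol_ne h2, Matrix.updateCol_ne h1]
  rw [hswap, Matrix.det_permute', Equiv.Perm.sign_swap (cc_ne m)]
  simp

theorem detB0 (m : ℕ) (y : PA) :
    (MatU m (e1v m) (eAv m + y • eBv m)).det
    = (MatU m (e1v m) (eAv m)).det + y * (MatU m (e1v m) (eBv m)).det := by
  unfold MatU
  rw [Matrix.det_updateCol_add, Matrix.det_updateCol_smul]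

def EE (m : ℕ) : (Fin (m+2) ⊕ Fin (m+1)) ⊕ Fin 2 ≃ Idx m where
  toFun r := match r with
    | Sum.inl (Sum.inl i) => Sum.inl ⟨i.1, by omega⟩
    | Sum.inl (Sum.inr j) => Sum.inr ⟨j.1, by omega⟩
    | Sum.inr k => if k = 0 then Sum.inl ⟨m+2, by omega⟩ else Sum.inr ⟨m+1, by omega⟩
  invFun r := match r with
    | Sum.inl h => if hh : h.1 < m+2 then Sum.inl (Sum.inl ⟨h.1, hh⟩) else Sum.inr 0
    | Sum.inr h => if hh : h.1 < m+1 then Sum.inl (Sum.inr ⟨h.1, hh⟩) else Sum.inr 1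
  left_inv := by
    rintro ((i|j)|k)
    · simp [i.2]
    · simp [j.2]
    · fin_cases k <;> simp
  right_inv := by
    rintro (h|h)
    · by_cases hh : h.1 < m+2
      · simp [hh]
      · have h2 : h.1 = m+2 := by omega
        simp [hh, Fin.ext_iff, h2]
    · by_cases hh : h.1 < m+1
      · simp [hh]
      · have h2 : h.1 = m+1 := by omega
        simp [hh, Fin.ext_iff, h2]

theorem detFinal (m : ℕ) : (MatU m (e1v m) (eBv m)).det = Mdet (m+3) := by
  rw [← Matrix.det_submatrix_equiv_self (EE m)]
  have hB : (MatU m (e1v m) (eBv m)).submatrix (EE m) (EE m)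
      = Matrix.fromBlocks (Nmat (m+3)) 0
          (Matrix.of fun p q => (MatU m (e1v m) (eBv m)) (EE m (Sum.inr p)) (EE m (Sum.inl q)))
          1 := by
    ext r c
    cases r with
    | inl ri =>
      cases c with
      | inl ci =>
        -- top-left block: equals Nmat (m+3)
        have hc1 : EE m (Sum.inl ci) ≠ cc1 m := by
          rcases ci with i | j
          · simp [EE, cc1, Fin.ext_iff, -Fin.val_eq_zero_iff]; omega
          · simp [EE, cc1]
        have hc2 : EE m (Sum.inl ci) ≠ cc2 m := by
          rcases ci with i | j
          · simp [EE, cc2]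
          · simp [EE, cc2, Fin.ext_iff, -Fin.val_eq_zero_iff]; omega
        simp only [Matrix.submatrix_apply, MatU, Matrix.updateCol_ne hc2,
          Matrix.updateCol_ne hc1]
        rcases ri with hi | hj <;> rcases ci with i | j <;> rfl
      | inr k =>
        -- top-right block: zero
        simp only [Matrix.submatrix_apply, MatU]
        have hr : ∀ z : Idx m, z = EE m (Sum.inl ri) →
            e1v m z = 0 ∧ eBv m z = 0 := by
          rintro z rfl
          rcases ri with i | j
          · constructor
            · simp [e1v, EE, Fin.ext_iff, -Fin.val_eq_zero_iff]; omega
            · simp [eBv, EE]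
          · constructor
            · simp [e1v, EE]
            · simp [eBv, EE, Fin.ext_iff, -Fin.val_eq_zero_iff]; omega
        obtain ⟨h1, h2⟩ := hr _ rfl
        by_cases hk : k = 0
        · subst hk
          have : EE m (Sum.inr 0) = cc1 m := by simp [EE, cc1]
          rw [this, Matrix.updateCol_ne (cc_ne m), Matrix.updateCol_self, h1]
          rfl
        · have hk1 : k = 1 := by omega
          subst hk1
          have : EE m (Sum.inr 1) = cc2 m := by simp [EE, cc2]
          rw [this, Matrix.updateCol_self, h2]
          rfl
    | inr rk =>
      cases c with
      | inl ci => rfl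
      | inr k =>
        -- bottom-right block: identity
        simp only [Matrix.submatrix_apply, MatU]
        by_cases hk : k = 0
        · subst hk
          have : EE m (Sum.inr 0) = cc1 m := by simp [EE, cc1]
          rw [this, Matrix.updateCol_ne (cc_ne m), Matrix.updateCol_self]
          fin_cases rk
          · simp [e1v, EE, cc1, Matrix.fromBlocks, Matrix.one_apply]
          · simp [e1v, EE, cc1, Matrix.fromBlocks, Matrix.one_apply, Fin.ext_iff, -Fin.val_eq_zero_iff]
        · have hk1 : k = 1 := by omega
          subst hk1
          have : EE m (Sum.inr 1) = cc2 m := by simp [EE, cc2]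
          rw [this, Matrix.updateCol_self]
          fin_cases rk
          · simp [eBv, EE, Matrix.fromBlocks, Matrix.one_apply, Fin.ext_iff, -Fin.val_eq_zero_iff]
          · simp [eBv, EE, Matrix.fromBlocks, Matrix.one_apply, Fin.ext_iff, -Fin.val_eq_zero_iff]
  rw [hB, Matrix.det_fromBlocks_zero₁₂, Matrix.det_one, mul_one]
  rfl

theorem stepD (m : ℕ) :
    (MatU m (uvec m (m+2) (av 0 0)) (wvec m (m+1) (av 1 1))).det
    + (MatU m (wvec m (m+1) (av 1 0)) (uvec m (m+2) (av 0 1))).det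
    = (av 1 1 - av 1 0) * Mdet (m+3) := by
  rw [uvec_top, uvec_top, swap_det m 0 (wvec m (m+1) (av 1 0)),
    wvec_top, wvec_top, detB0, detB0, detFinal]
  ring

theorem double_sum_ite {M : Type*} [AddCommMonoid M] (F : ℕ → ℕ → M) (n a0 b0 : ℕ)
    (ha : a0 < n) (hb : b0 < n) :
    (∑ a ∈ Finset.range n, ∑ b ∈ Finset.range n,
      if a = a0 ∧ b = b0 then F a b else 0) = F a0 b0 := by
  rw [Finset.sum_eq_single a0
    (fun a _ ha' => Finset.sum_eq_zero fun b _ => if_neg (fun h => ha' h.1))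
    (fun h => absurd (Finset.mem_range.2 ha) h)]
  rw [Finset.sum_eq_single b0
    (fun b _ hb' => if_neg (fun h => hb' h.2))
    (fun h => absurd (Finset.mem_range.2 hb) h)]
  rw [if_pos ⟨rfl, rfl⟩]

theorem coeff_Mdet' (m : ℕ) (d : (Fin 2 × ℕ) →₀ ℕ)
    (hd1 : d ((0 : Fin 2), m+3) = 0) (hd2 : d ((1 : Fin 2), m+3) = 0) :
    MvPolynomial.coeff
        (d + Finsupp.single ((0 : Fin 2), m+3) (m+2) +
          Finsupp.single ((1 : Fin 2), m+3) (m+1)) (Mdet (m+4)) =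
      MvPolynomial.coeff d ((av 1 1 - av 1 0) * Mdet (m+3)) := by
  have hx1 := av_mem m 0 (show (0:ℕ) ≠ m+3 by omega)
  have hx2 := av_mem m 0 (show (1:ℕ) ≠ m+3 by omega)
  have hy1 := av_mem m 1 (show (0:ℕ) ≠ m+3 by omega)
  have hy2 := av_mem m 1 (show (1:ℕ) ≠ m+3 by omega)
  have huu : ∀ a b : ℕ, (MatU m (uvec m a (av 0 0)) (uvec m b (av 0 1))).det
      ∈ supported ℂ (SV m) := fun a b =>
    detMatU_mem m _ _ (uvec_mem m a hx1) (uvec_mem m b hx2)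
  have huw : ∀ a b : ℕ, (MatU m (uvec m a (av 0 0)) (wvec m b (av 1 1))).det
      ∈ supported ℂ (SV m) := fun a b =>
    detMatU_mem m _ _ (uvec_mem m a hx1) (wvec_mem m b hy2)
  have hwu : ∀ a b : ℕ, (MatU m (wvec m a (av 1 0)) (uvec m b (av 0 1))).det
      ∈ supported ℂ (SV m) := fun a b =>
    detMatU_mem m _ _ (wvec_mem m a hy1) (uvec_mem m b hx2)
  have hww : ∀ a b : ℕ, (MatU m (wvec m a (av 1 0)) (wvec m b (av 1 1))).det
      ∈ supported ℂ (SV m) := fun a b =>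
    detMatU_mem m _ _ (wvec_mem m a hy1) (wvec_mem m b hy2)
  rw [expand m, coeff_sum]
  have hstep : ∀ a : ℕ,
      MvPolynomial.coeff
        (d + Finsupp.single ((0 : Fin 2), m+3) (m+2) +
          Finsupp.single ((1 : Fin 2), m+3) (m+1))
        (∑ b ∈ Finset.range (m+3),
          (av 0 (m+3)^a * av 0 (m+3)^b * (MatU m (uvec m a (av 0 0)) (uvec m b (av 0 1))).det
           + av 0 (m+3)^a * av 1 (m+3)^b * (MatU m (uvec m a (av 0 0)) (wvec m b (av 1 1))).det
           + av 1 (m+3)^a * av 0 (m+3)^b * (MatU m (wvec m a (av 1 0)) (uvec m b (av 0 1))).det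
           + av 1 (m+3)^a * av 1 (m+3)^b * (MatU m (wvec m a (av 1 0)) (wvec m b (av 1 1))).det))
      = (∑ b ∈ Finset.range (m+3),
          (if a = m+2 ∧ b = m+1 then
            MvPolynomial.coeff d ((MatU m (uvec m a (av 0 0)) (wvec m b (av 1 1))).det) else 0))
        + (∑ b ∈ Finset.range (m+3),
          (if b = m+2 ∧ a = m+1 then
            MvPolynomial.coeff d ((MatU m (wvec m a (av 1 0)) (uvec m b (av 0 1))).det) else 0)) := by
    intro a
    rw [coeff_sum, ← Finset.sum_add_distrib]
    refine Finset.sum_congr rfl fun b _ => ?_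
    rw [coeff_add, coeff_add, coeff_add]
    have t1 : av 0 (m+3)^a * av 0 (m+3)^b *
        (MatU m (uvec m a (av 0 0)) (uvec m b (av 0 1))).det
        = av 0 (m+3)^(a+b) * av 1 (m+3)^0 *
          (MatU m (uvec m a (av 0 0)) (uvec m b (av 0 1))).det := by ring
    have t4 : av 1 (m+3)^a * av 1 (m+3)^b *
        (MatU m (wvec m a (av 1 0)) (wvec m b (av 1 1))).det
        = av 0 (m+3)^0 * av 1 (m+3)^(a+b) *
          (MatU m (wvec m a (av 1 0)) (wvec m b (av 1 1))).det := by ring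
    have t3 : av 1 (m+3)^a * av 0 (m+3)^b *
        (MatU m (wvec m a (av 1 0)) (uvec m b (av 0 1))).det
        = av 0 (m+3)^b * av 1 (m+3)^a *
          (MatU m (wvec m a (av 1 0)) (uvec m b (av 0 1))).det := by ring
    rw [t1, t3, t4,
      coeff_key m (huu a b) (a+b) 0 d hd1 hd2,
      coeff_key m (huw a b) a b d hd1 hd2,
      coeff_key m (hwu a b) b a d hd1 hd2,
      coeff_key m (hww a b) 0 (a+b) d hd1 hd2,
      if_neg (by omega : ¬ (a+b = m+2 ∧ 0 = m+1)),
      if_neg (by omega : ¬ ((0:ℕ) = m+2 ∧ a+b = m+1))]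
    ring
  rw [Finset.sum_congr rfl (fun a _ => hstep a), Finset.sum_add_distrib,
    double_sum_ite _ (m+3) (m+2) (m+1) (by omega) (by omega)]
  have hswap2 : (∑ a ∈ Finset.range (m+3), ∑ b ∈ Finset.range (m+3),
      if b = m+2 ∧ a = m+1 then
        MvPolynomial.coeff d ((MatU m (wvec m a (av 1 0)) (uvec m b (av 0 1))).det) else 0)
      = MvPolynomial.coeff d ((MatU m (wvec m (m+1) (av 1 0)) (uvec m (m+2) (av 0 1))).det) := by
    rw [Finset.sum_comm]
    exact double_sum_ite
      (fun b a => MvPolynomial.coeff d ((MatU m (wvec m a (av 1 0)) (uvec m b (av 0 1))).det))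
      (m+3) (m+2) (m+1) (by omega) (by omega)
  rw [hswap2, ← coeff_add]
  exact congrArg _ (stepD m)

/-- for `g ≥ 4`, the coefficient of the monomial
`α_{1,g}^{g−2} α_{2,g}^{g−3}` in `M_g` (a polynomial in the remaining variables)
equals `(α_{2,2} − α_{2,1}) · M_{g−1}`; expressed coefficientwise: for every exponent
vector `d` not involving `α_{1,g}` and `α_{2,g}`, the coefficient of
`d + (g−2)·e_{(1,g)} + (g−3)·e_{(2,g)}` in `M_g` is the coefficient of `d` in
`(α_{2,2} − α_{2,1}) · M_{g−1}`. -/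
theorem coeff_Mdet (g : ℕ) (hg : 4 ≤ g) :
    ∀ d : (Fin 2 × ℕ) →₀ ℕ, d ((0 : Fin 2), g - 1) = 0 → d ((1 : Fin 2), g - 1) = 0 →
      MvPolynomial.coeff
          (d + Finsupp.single ((0 : Fin 2), g - 1) (g - 2) +
            Finsupp.single ((1 : Fin 2), g - 1) (g - 3)) (Mdet g) =
        MvPolynomial.coeff d ((av 1 1 - av 1 0) * Mdet (g - 1)) := by
  obtain ⟨m, rfl⟩ : ∃ m, g = m + 4 := ⟨g - 4, by omega⟩
  intro d hd1 hd2
  exact coeff_Mdet' m d hd1 hd2
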